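/- For fixed S positive semidefinite, the kernel (μ, μ') ↦ exp(-⟨Σ(μ + μ'), S⟩) is a positive definite kernel on probability measures on ℝ^n with finite moments: for any μ_1,…,μ_k and c_1,…,c_k ∈ ℝ, Σ_{i,j} c_i c_j exp(-⟨Σ(μ_i + μ_j), S⟩) ≥ 0. -/

import Mathlib

open Finset Matrix

noncomputable def meanVec {n : ℕ} (μ : (Fin n → ℝ) →₀ ℝ) : Fin n → ℝ :=
  fun i => ∑ p ∈ μ.support, μ p * p i

noncomputable def varMat {n : ℕ} (μ : (Fin n → ℝ) →₀ ℝ) : Matrix (Fin n) (Fin n) ℝ :=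
  Matrix.of fun i j =>
    (∑ p ∈ μ.support, μ p * p i * p j) - meanVec μ i * meanVec μ j

/-- Gram-power kernels are positive semidefinite. -/
lemma gram_pow_nonneg {n k m : ℕ} (w : Fin k → Fin n → ℝ) (a : Fin k → ℝ) :
    0 ≤ ∑ i, ∑ j, a i * a j * (dotProduct (w i) (w j)) ^ m := by
  have expand : ∀ i j : Fin k, (dotProduct (w i) (w j)) ^ m
      = ∑ g : Fin m → Fin n, (∏ l, w i (g l)) * (∏ l, w j (g l)) := by
    intro i j
    have h1 : (dotProduct (w i) (w j)) ^ m = ∏ _l : Fin m, ∑ t, w i t * w j t := by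
      simp [dotProduct, Finset.prod_const]
    rw [h1, Finset.prod_univ_sum]
    simp [Fintype.piFinset_univ, Finset.prod_mul_distrib]
  have key : ∑ i, ∑ j, a i * a j * (dotProduct (w i) (w j)) ^ m
      = ∑ g : Fin m → Fin n, (∑ i, a i * ∏ l, w i (g l)) ^ 2 := by
    have hsq : ∀ g : Fin m → Fin n, (∑ i, a i * ∏ l, w i (g l)) ^ 2
        = ∑ i, ∑ j, (a i * ∏ l, w i (g l)) * (a j * ∏ l, w j (g l)) := by
      intro g
      rw [sq, Finset.sum_mul]
      exact Finset.sum_congr rfl fun i _ => by rw [Finset.mul_sum]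
    calc ∑ i, ∑ j, a i * a j * (dotProduct (w i) (w j)) ^ m
        = ∑ i, ∑ j, ∑ g : Fin m → Fin n,
            (a i * ∏ l, w i (g l)) * (a j * ∏ l, w j (g l)) := by
          refine Finset.sum_congr rfl fun i _ => Finset.sum_congr rfl fun j _ => ?_
          rw [expand i j, Finset.mul_sum]
          exact Finset.sum_congr rfl fun g _ => by ring
      _ = ∑ i, ∑ g : Fin m → Fin n, ∑ j,
            (a i * ∏ l, w i (g l)) * (a j * ∏ l, w j (g l)) :=
          Finset.sum_congr rfl fun i _ => Finset.sum_comm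
      _ = ∑ g : Fin m → Fin n, ∑ i, ∑ j,
            (a i * ∏ l, w i (g l)) * (a j * ∏ l, w j (g l)) := Finset.sum_comm
      _ = ∑ g : Fin m → Fin n, (∑ i, a i * ∏ l, w i (g l)) ^ 2 :=
          Finset.sum_congr rfl fun g _ => (hsq g).symm
  rw [key]
  exact Finset.sum_nonneg fun g _ => sq_nonneg _

/-- exp of a Gram kernel is positive semidefinite. -/
lemma exp_gram_nonneg {n k : ℕ} (w : Fin k → Fin n → ℝ) (a : Fin k → ℝ) :
    0 ≤ ∑ i, ∑ j, a i * a j * Real.exp (dotProduct (w i) (w j)) := by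
  have hexp : ∀ x : ℝ, Real.exp x = ∑' q : ℕ, x ^ q / (q.factorial : ℝ) := by
    intro x
    rw [Real.exp_eq_exp_ℝ, NormedSpace.exp_eq_tsum_div]
  have hsummable : ∀ (i j : Fin k),
      Summable (fun q : ℕ => a i * a j * ((dotProduct (w i) (w j)) ^ q / (q.factorial : ℝ))) :=
    fun i j => (Real.summable_pow_div_factorial _).mul_left _
  calc (0:ℝ) ≤ ∑' q : ℕ, ∑ i, ∑ j, a i * a j * ((dotProduct (w i) (w j)) ^ q / (q.factorial : ℝ)) := by
        refine tsum_nonneg fun q => ?_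
        have h1 : ∑ i, ∑ j, a i * a j * ((dotProduct (w i) (w j)) ^ q / (q.factorial : ℝ))
            = (∑ i, ∑ j, a i * a j * (dotProduct (w i) (w j)) ^ q) * ((q.factorial : ℝ))⁻¹ := by
          simp_rw [Finset.sum_mul]
          refine Finset.sum_congr rfl fun i _ => Finset.sum_congr rfl fun j _ => by ring
        rw [h1]
        exact mul_nonneg (gram_pow_nonneg w a) (by positivity)
    _ = ∑ i, ∑ j, a i * a j * Real.exp (dotProduct (w i) (w j)) := by
        rw [Summable.tsum_finsetSum (fun i _ => summable_sum fun j _ => hsummable i j)]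
        refine Finset.sum_congr rfl fun i _ => ?_
        rw [Summable.tsum_finsetSum (fun j _ => hsummable i j)]
        refine Finset.sum_congr rfl fun j _ => ?_
        rw [tsum_mul_left, ← hexp]

lemma meanVec_add {n : ℕ} (μ ν : (Fin n → ℝ) →₀ ℝ) (i : Fin n) :
    meanVec (μ + ν) i = meanVec μ i + meanVec ν i := by
  show (μ + ν).sum (fun p v => v * p i) = μ.sum (fun p v => v * p i) + ν.sum (fun p v => v * p i)
  exact Finsupp.sum_add_index' (fun p => zero_mul _) (fun p v w => add_mul v w _)

lemma secondMoment_add {n : ℕ} (μ ν : (Fin n → ℝ) →₀ ℝ) (i j : Fin n) :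
    ∑ p ∈ (μ + ν).support, (μ + ν) p * p i * p j
      = (∑ p ∈ μ.support, μ p * p i * p j) + ∑ p ∈ ν.support, ν p * p i * p j := by
  show (μ + ν).sum (fun p v => v * p i * p j)
      = μ.sum (fun p v => v * p i * p j) + ν.sum (fun p v => v * p i * p j)
  exact Finsupp.sum_add_index' (fun p => by ring) (fun p v w => by ring)

lemma varMat_add {n : ℕ} (μ ν : (Fin n → ℝ) →₀ ℝ) (i j : Fin n) :
    varMat (μ + ν) i j = varMat μ i j + varMat ν i j
      - (meanVec μ i * meanVec ν j + meanVec ν i * meanVec μ j) := by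
  simp only [varMat, Matrix.of_apply, secondMoment_add, meanVec_add]
  ring

lemma trace_varMat_add {n : ℕ} (S : Matrix (Fin n) (Fin n) ℝ) (hSym : Sᵀ = S)
    (μ ν : (Fin n → ℝ) →₀ ℝ) :
    ((varMat (μ + ν)) * S).trace = ((varMat μ) * S).trace + ((varMat ν) * S).trace
      - 2 * dotProduct (meanVec μ) (S.mulVec (meanVec ν)) := by
  have hS : ∀ i j, S j i = S i j := by
    intro i j
    conv_lhs => rw [← hSym]
    exact Matrix.transpose_apply S j i
  have hC : ∑ i, ∑ j, meanVec μ i * meanVec ν j * S j i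
      = dotProduct (meanVec μ) (S.mulVec (meanVec ν)) := by
    simp only [dotProduct, Matrix.mulVec, Finset.mul_sum]
    exact Finset.sum_congr rfl fun i _ => Finset.sum_congr rfl fun j _ => by rw [hS]; ring
  have hD : ∑ i, ∑ j, meanVec ν i * meanVec μ j * S j i
      = dotProduct (meanVec μ) (S.mulVec (meanVec ν)) := by
    rw [Finset.sum_comm]
    simp only [dotProduct, Matrix.mulVec, Finset.mul_sum]
    exact Finset.sum_congr rfl fun i _ => Finset.sum_congr rfl fun j _ => by ring
  simp only [Matrix.trace, Matrix.diag, Matrix.mul_apply, varMat_add, sub_mul, add_mul,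
    Finset.sum_sub_distrib, Finset.sum_add_distrib]
  rw [hC, hD]
  ring

/-- (μ,μ') ↦ exp(-⟨Σ(μ+μ'), S⟩) is a positive definite kernel on probability measures. -/
theorem exp_neg_frobenius_varMat_posDef {n k : ℕ} (S : Matrix (Fin n) (Fin n) ℝ)
    (hS : S.PosSemidef) (μ : Fin k → ((Fin n → ℝ) →₀ ℝ))
    (hpos : ∀ i p, 0 ≤ μ i p) (hprob : ∀ i, ∑ p ∈ (μ i).support, μ i p = 1)
    (c : Fin k → ℝ) :
    0 ≤ ∑ i, ∑ j, c i * c j * Real.exp (-((varMat (μ i + μ j)) * S).trace) := by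
  obtain ⟨B, hB⟩ : ∃ B : Matrix (Fin n) (Fin n) ℝ, S = Bᴴ * B := by
    open scoped MatrixOrder in
    exact ⟨CFC.sqrt S, by
      have h1 : (CFC.sqrt S)ᴴ = CFC.sqrt S := (CFC.sqrt_nonneg S).isSelfAdjoint.star_eq
      rw [h1, CFC.sqrt_mul_sqrt_self S hS.nonneg]⟩
  have hSym : Sᵀ = S := hS.isHermitian
  set m : Fin k → Fin n → ℝ := fun i => meanVec (μ i) with hm
  set t : Fin k → ℝ := fun i => ((varMat (μ i)) * S).trace with ht
  set w : Fin k → Fin n → ℝ := fun i => (Real.sqrt 2) • (B.mulVec (m i)) with hw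
  have core : ∀ u v : Fin n → ℝ, dotProduct (B.mulVec u) (B.mulVec v)
      = dotProduct u (S.mulVec v) := by
    intro u v
    have h1 : Bᴴ = Bᵀ := by ext x y; simp [Matrix.conjTranspose_apply]
    rw [hB, h1]
    conv_lhs => rw [Matrix.dotProduct_mulVec]
    conv_rhs => rw [Matrix.dotProduct_mulVec]
    congr 1
    rw [← Matrix.vecMul_vecMul, Matrix.vecMul_transpose]
  have hdot : ∀ i j, dotProduct (w i) (w j) = 2 * dotProduct (m i) (S.mulVec (m j)) := by
    intro i j
    simp only [hw, smul_dotProduct, dotProduct_smul, smul_eq_mul, ← mul_assoc]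
    rw [Real.mul_self_sqrt (by norm_num), core]
  have key : ∀ i j, Real.exp (-((varMat (μ i + μ j)) * S).trace)
      = Real.exp (-t i) * Real.exp (-t j) * Real.exp (dotProduct (w i) (w j)) := by
    intro i j
    rw [trace_varMat_add S hSym, hdot, ← Real.exp_add, ← Real.exp_add]
    ring_nf
    rfl
  simp_rw [key]
  have h2 : ∑ i, ∑ j, c i * c j
        * (Real.exp (-t i) * Real.exp (-t j) * Real.exp (dotProduct (w i) (w j)))
      = ∑ i, ∑ j, (c i * Real.exp (-t i)) * (c j * Real.exp (-t j))
        * Real.exp (dotProduct (w i) (w j)) := by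
    refine Finset.sum_congr rfl fun i _ => Finset.sum_congr rfl fun j _ => by ring
  rw [h2]
  exact exp_gram_nonneg w (fun i => c i * Real.exp (-t i))
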